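/- Let Ω ⊂ ℝⁿ be a convex domain with 0 ∈ Ω and Ω = −Ω, and T_Ω := Ω + iℝⁿ. Then for all X, Y ∈ ℝⁿ and all choices of signs, κ_{T_Ω}(0; ±X ± iY) = κ_{T_Ω}(0; X + iY) = κ_{T_Ω}(0; ±Y ± iX). -/

import Mathlib

open Metric Set

/-- The Kobayashi–Royden pseudometric. -/
noncomputable def kobayashiRoyden {n : ℕ} (D : Set (EuclideanSpace ℂ (Fin n)))
    (z X : EuclideanSpace ℂ (Fin n)) : ℝ :=
  sInf {t : ℝ | 0 < t ∧ ∃ f : ℂ → EuclideanSpace ℂ (Fin n),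
    DifferentiableOn ℂ f (ball 0 1) ∧ MapsTo f (ball 0 1) D ∧ f 0 = z ∧ t • deriv f 0 = X}


open Filter Topology

def conjVec {n : ℕ} (z : EuclideanSpace ℂ (Fin n)) : EuclideanSpace ℂ (Fin n) :=
  WithLp.toLp 2 (fun j => (starRingEnd ℂ) (z j))

lemma conjVec_conjVec {n : ℕ} (z : EuclideanSpace ℂ (Fin n)) : conjVec (conjVec z) = z := by
  ext j; simp [conjVec]

lemma conjVec_smul {n : ℕ} (a : ℂ) (v : EuclideanSpace ℂ (Fin n)) :
    conjVec (a • v) = (starRingEnd ℂ a) • conjVec v := by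
  ext j
  simp [conjVec, PiLp.smul_apply, map_mul]

lemma conjVec_sub {n : ℕ} (u v : EuclideanSpace ℂ (Fin n)) :
    conjVec (u - v) = conjVec u - conjVec v := by
  ext j
  simp [conjVec, PiLp.sub_apply]

lemma conjVec_real_smul {n : ℕ} (t : ℝ) (v : EuclideanSpace ℂ (Fin n)) :
    conjVec (t • v) = t • conjVec v := by
  ext j
  simp [conjVec, PiLp.smul_apply, Complex.real_smul, map_mul, Complex.conj_ofReal]

lemma conjVec_continuous {n : ℕ} : Continuous (conjVec (n := n)) := by
  have h : Continuous (fun z : Fin n → ℂ => (fun j => (starRingEnd ℂ) (z j) : Fin n → ℂ)) :=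
    continuous_pi fun j => Complex.continuous_conj.comp (continuous_apply j)
  exact ((PiLp.continuousLinearEquiv 2 ℂ (fun _ : Fin n => ℂ)).symm.continuous.comp
    (h.comp (PiLp.continuousLinearEquiv 2 ℂ (fun _ : Fin n => ℂ)).continuous))

lemma conj_hasDerivAt {n : ℕ} {f : ℂ → EuclideanSpace ℂ (Fin n)} {v : EuclideanSpace ℂ (Fin n)}
    {ζ₀ : ℂ} (hf : HasDerivAt f v ((starRingEnd ℂ) ζ₀)) :
    HasDerivAt (fun ζ => conjVec (f ((starRingEnd ℂ) ζ))) (conjVec v) ζ₀ := by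
  rw [hasDerivAt_iff_tendsto_slope] at hf ⊢
  have hconj : Tendsto (fun ζ => (starRingEnd ℂ) ζ) (𝓝[≠] ζ₀) (𝓝[≠] ((starRingEnd ℂ) ζ₀)) := by
    refine Tendsto.inf (Complex.continuous_conj.continuousAt) ?_
    rw [tendsto_principal_principal]
    intro ζ hζ
    simp only [mem_compl_iff, mem_singleton_iff] at *
    exact fun h => hζ (by simpa using congrArg (starRingEnd ℂ) h)
  have h2 := (conjVec_continuous.continuousAt (x := v)).tendsto.comp (hf.comp hconj)
  refine h2.congr fun ζ => ?_
  simp only [Function.comp_apply, slope_def_module]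
  rw [conjVec_smul, conjVec_sub, map_inv₀, map_sub]
  simp

lemma kr_rot_subset {n : ℕ} (D : Set (EuclideanSpace ℂ (Fin n)))
    (z V : EuclideanSpace ℂ (Fin n)) (ω : ℂ) (hω : ‖ω‖ = 1) :
    {t : ℝ | 0 < t ∧ ∃ f : ℂ → EuclideanSpace ℂ (Fin n),
      DifferentiableOn ℂ f (ball 0 1) ∧ MapsTo f (ball 0 1) D ∧ f 0 = z ∧ t • deriv f 0 = V} ⊆
    {t : ℝ | 0 < t ∧ ∃ f : ℂ → EuclideanSpace ℂ (Fin n),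
      DifferentiableOn ℂ f (ball 0 1) ∧ MapsTo f (ball 0 1) D ∧ f 0 = z ∧ t • deriv f 0 = ω • V} := by
  rintro t ⟨ht, f, hdiff, hmaps, hf0, hder⟩
  have hmem : ∀ ζ : ℂ, ζ ∈ ball (0:ℂ) 1 → ω * ζ ∈ ball (0:ℂ) 1 := by
    intro ζ hζ
    rw [mem_ball_zero_iff] at *
    simpa [norm_mul, hω] using hζ
  refine ⟨ht, fun ζ => f (ω * ζ), ?_, ?_, by simpa using hf0, ?_⟩
  · exact hdiff.comp ((differentiable_id.const_mul ω).differentiableOn) hmem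
  · exact fun ζ hζ => hmaps (hmem ζ hζ)
  · have hfd : DifferentiableAt ℂ f 0 :=
      hdiff.differentiableAt (isOpen_ball.mem_nhds (by simp))
    have h1 : HasDerivAt (fun ζ => f (ω * ζ)) (ω • deriv f 0) 0 := by
      have hh : HasDerivAt (fun ζ : ℂ => ω * ζ) ω 0 := by
        simpa using (hasDerivAt_id (0:ℂ)).const_mul ω
      have hg : HasDerivAt f (deriv f 0) ((fun ζ : ℂ => ω * ζ) 0) := by
        simpa using hfd.hasDerivAt
      exact HasDerivAt.scomp (𝕜 := ℂ) 0 hg hh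
    rw [h1.deriv, smul_comm, hder]

lemma kr_rot {n : ℕ} (D : Set (EuclideanSpace ℂ (Fin n)))
    (z V : EuclideanSpace ℂ (Fin n)) (ω : ℂ) (hω : ‖ω‖ = 1) :
    kobayashiRoyden D z (ω • V) = kobayashiRoyden D z V := by
  have hω0 : ω ≠ 0 := by intro h; simp [h] at hω
  have hωinv : ‖ω⁻¹‖ = 1 := by rw [norm_inv, hω]; norm_num
  unfold kobayashiRoyden
  congr 1
  apply Subset.antisymm
  · have := kr_rot_subset D z (ω • V) ω⁻¹ hωinv
    rwa [inv_smul_smul₀ hω0] at this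
  · exact kr_rot_subset D z V ω hω

lemma kr_conj_subset {n : ℕ} (T : Set (EuclideanSpace ℂ (Fin n)))
    (hCT : ∀ z ∈ T, conjVec z ∈ T) (V : EuclideanSpace ℂ (Fin n)) :
    {t : ℝ | 0 < t ∧ ∃ f : ℂ → EuclideanSpace ℂ (Fin n),
      DifferentiableOn ℂ f (ball 0 1) ∧ MapsTo f (ball 0 1) T ∧ f 0 = 0 ∧ t • deriv f 0 = V} ⊆
    {t : ℝ | 0 < t ∧ ∃ f : ℂ → EuclideanSpace ℂ (Fin n),
      DifferentiableOn ℂ f (ball 0 1) ∧ MapsTo f (ball 0 1) T ∧ f 0 = 0 ∧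
        t • deriv f 0 = conjVec V} := by
  rintro t ⟨ht, f, hdiff, hmaps, hf0, hder⟩
  have hmem : ∀ ζ : ℂ, ζ ∈ ball (0:ℂ) 1 → (starRingEnd ℂ) ζ ∈ ball (0:ℂ) 1 := by
    intro ζ hζ
    rw [mem_ball_zero_iff] at *
    simpa using hζ
  have hda : ∀ ζ : ℂ, ζ ∈ ball (0:ℂ) 1 →
      HasDerivAt (fun ζ' => conjVec (f ((starRingEnd ℂ) ζ')))
        (conjVec (deriv f ((starRingEnd ℂ) ζ))) ζ := by
    intro ζ hζ
    have hfd : DifferentiableAt ℂ f ((starRingEnd ℂ) ζ) :=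
      hdiff.differentiableAt (isOpen_ball.mem_nhds (hmem ζ hζ))
    exact conj_hasDerivAt hfd.hasDerivAt
  refine ⟨ht, fun ζ => conjVec (f ((starRingEnd ℂ) ζ)), ?_, ?_, ?_, ?_⟩
  · intro ζ hζ
    exact ((hda ζ hζ).differentiableAt).differentiableWithinAt
  · intro ζ hζ
    exact hCT _ (hmaps (hmem ζ hζ))
  · show conjVec (f ((starRingEnd ℂ) 0)) = 0
    rw [map_zero, hf0]
    ext j; simp [conjVec]
  · have h0 : (0:ℂ) ∈ ball (0:ℂ) 1 := by simp
    rw [(hda 0 h0).deriv]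
    rw [map_zero, ← conjVec_real_smul, hder]

lemma kr_conj {n : ℕ} (T : Set (EuclideanSpace ℂ (Fin n)))
    (hCT : ∀ z ∈ T, conjVec z ∈ T) (V : EuclideanSpace ℂ (Fin n)) :
    kobayashiRoyden T 0 (conjVec V) = kobayashiRoyden T 0 V := by
  unfold kobayashiRoyden
  congr 1
  apply Subset.antisymm
  · have := kr_conj_subset T hCT (conjVec V)
    rwa [conjVec_conjVec] at this
  · exact kr_conj_subset T hCT V

/-- For `Ω ⊂ ℝⁿ` a convex domain with `0 ∈ Ω` and `Ω = −Ω`, for all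
`X, Y ∈ ℝⁿ` and all choices of signs `ε₁, ε₂ = ±1`:
`κ_{T_Ω}(0; ε₁X + iε₂Y) = κ_{T_Ω}(0; X + iY) = κ_{T_Ω}(0; ε₁Y + iε₂X)`. -/
theorem stmt9 (n : ℕ) (Ω : Set (EuclideanSpace ℝ (Fin n)))
    (hconv : Convex ℝ Ω) (hopen : IsOpen Ω) (h0 : (0 : EuclideanSpace ℝ (Fin n)) ∈ Ω)
    (hsym : Ω = -Ω)
    (T : Set (EuclideanSpace ℂ (Fin n)))
    (hT : T = {z | (WithLp.toLp 2 (fun j => (z j).re) : EuclideanSpace ℝ (Fin n)) ∈ Ω})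
    (X Y : EuclideanSpace ℝ (Fin n)) :
    ∀ ε₁ ε₂ : ℝ, (ε₁ = 1 ∨ ε₁ = -1) → (ε₂ = 1 ∨ ε₂ = -1) →
      kobayashiRoyden T 0 (WithLp.toLp 2 (fun j => (ε₁ * X j : ℝ) + Complex.I * ((ε₂ * Y j : ℝ) : ℂ)))
        = kobayashiRoyden T 0 (WithLp.toLp 2 (fun j => (X j : ℂ) + Complex.I * (Y j : ℂ))) ∧
      kobayashiRoyden T 0 (WithLp.toLp 2 (fun j => (X j : ℂ) + Complex.I * (Y j : ℂ)))
        = kobayashiRoyden T 0 (WithLp.toLp 2 (fun j => (ε₁ * Y j : ℝ) + Complex.I * ((ε₂ * X j : ℝ) : ℂ))) := by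
  intro ε₁ ε₂ hε₁ hε₂
  set V : EuclideanSpace ℂ (Fin n) := WithLp.toLp 2 (fun j => (X j : ℂ) + Complex.I * (Y j : ℂ)) with hVdef
  have hCT : ∀ z ∈ T, conjVec z ∈ T := by
    intro z hz
    rw [hT] at hz ⊢
    simp only [mem_setOf_eq] at hz ⊢
    simpa [conjVec] using hz
  have hc : kobayashiRoyden T 0 (conjVec V) = kobayashiRoyden T 0 V := kr_conj T hCT V
  have e1 : ∀ ω : ℂ, ‖ω‖ = 1 →
      kobayashiRoyden T 0 (ω • V) = kobayashiRoyden T 0 V := fun ω hω => kr_rot T 0 V ω hω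
  have e2 : ∀ ω : ℂ, ‖ω‖ = 1 →
      kobayashiRoyden T 0 (ω • conjVec V) = kobayashiRoyden T 0 V :=
    fun ω hω => (kr_rot T 0 (conjVec V) ω hω).trans hc
  have hCV : conjVec V = (WithLp.toLp 2 (fun j => (X j : ℂ) - Complex.I * (Y j : ℂ)) : EuclideanSpace ℂ (Fin n)) := by
    ext j
    simp [conjVec, hVdef, Complex.conj_ofReal]
    ring
  have hn1 : ‖(-1 : ℂ)‖ = 1 := by simp
  have hI : ‖(Complex.I : ℂ)‖ = 1 := by simp
  have hnI : ‖(-Complex.I : ℂ)‖ = 1 := by simp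
  rcases hε₁ with rfl | rfl <;> rcases hε₂ with rfl | rfl
  · constructor
    · rw [show (WithLp.toLp 2 (fun j => ((1 * X j : ℝ) : ℂ) + Complex.I * ((1 * Y j : ℝ) : ℂ)) :
          EuclideanSpace ℂ (Fin n)) = V from by
        rw [hVdef]; ext j; simp only [PiLp.toLp_apply]; push_cast; ring]
    · rw [show (WithLp.toLp 2 (fun j => ((1 * Y j : ℝ) : ℂ) + Complex.I * ((1 * X j : ℝ) : ℂ)) :
          EuclideanSpace ℂ (Fin n)) = Complex.I • conjVec V from by
        rw [hCV]; ext j; rw [PiLp.smul_apply]; simp only [PiLp.toLp_apply]; push_cast [smul_eq_mul]; ring_nf; simp [Complex.I_sq]]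
      exact (e2 Complex.I hI).symm
  · constructor
    · rw [show (WithLp.toLp 2 (fun j => ((1 * X j : ℝ) : ℂ) + Complex.I * ((-1 * Y j : ℝ) : ℂ)) :
          EuclideanSpace ℂ (Fin n)) = conjVec V from by
        rw [hCV]; ext j; simp only [PiLp.toLp_apply]; push_cast; ring]
      exact hc
    · rw [show (WithLp.toLp 2 (fun j => ((1 * Y j : ℝ) : ℂ) + Complex.I * ((-1 * X j : ℝ) : ℂ)) :
          EuclideanSpace ℂ (Fin n)) = (-Complex.I) • V from by
        rw [hVdef]; ext j; rw [PiLp.smul_apply]; simp only [PiLp.toLp_apply]; push_cast [smul_eq_mul]; ring_nf; simp [Complex.I_sq]]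
      exact (e1 (-Complex.I) hnI).symm
  · constructor
    · rw [show (WithLp.toLp 2 (fun j => ((-1 * X j : ℝ) : ℂ) + Complex.I * ((1 * Y j : ℝ) : ℂ)) :
          EuclideanSpace ℂ (Fin n)) = (-1 : ℂ) • conjVec V from by
        rw [hCV]; ext j; rw [PiLp.smul_apply]; simp only [PiLp.toLp_apply]; push_cast [smul_eq_mul]; ring]
      exact e2 (-1) hn1
    · rw [show (WithLp.toLp 2 (fun j => ((-1 * Y j : ℝ) : ℂ) + Complex.I * ((1 * X j : ℝ) : ℂ)) :
          EuclideanSpace ℂ (Fin n)) = Complex.I • V from by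
        rw [hVdef]; ext j; rw [PiLp.smul_apply]; simp only [PiLp.toLp_apply]; push_cast [smul_eq_mul]; ring_nf; simp [Complex.I_sq]]
      exact (e1 Complex.I hI).symm
  · constructor
    · rw [show (WithLp.toLp 2 (fun j => ((-1 * X j : ℝ) : ℂ) + Complex.I * ((-1 * Y j : ℝ) : ℂ)) :
          EuclideanSpace ℂ (Fin n)) = (-1 : ℂ) • V from by
        rw [hVdef]; ext j; rw [PiLp.smul_apply]; simp only [PiLp.toLp_apply]; push_cast [smul_eq_mul]; ring]
      exact e1 (-1) hn1
    · rw [show (WithLp.toLp 2 (fun j => ((-1 * Y j : ℝ) : ℂ) + Complex.I * ((-1 * X j : ℝ) : ℂ)) :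
          EuclideanSpace ℂ (Fin n)) = (-Complex.I) • conjVec V from by
        rw [hCV]; ext j; rw [PiLp.smul_apply]; simp only [PiLp.toLp_apply]; push_cast [smul_eq_mul]; ring_nf; simp [Complex.I_sq]]
      exact (e2 (-Complex.I) hnI).symm
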